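/- Every locally finite (possibly infinite) graph has an integrated k-coloring for every integer k ≥ 2. -/

import Mathlib

open Finset

lemma card_filter_indicator {α : Type} [DecidableEq α] (t : Finset α) (p : α → Prop)
    [DecidablePred p] (v : α) (hv : v ∈ t) :
    (t.filter p).card = ((t.erase v).filter p).card + if p v then 1 else 0 := by
  conv_lhs => rw [← Finset.insert_erase hv]
  rw [Finset.filter_insert]
  split_ifs with h
  · rw [Finset.card_insert_of_notMem (by simp)]
  · simp

lemma exists_good_on (V : Type) (G : SimpleGraph V) [DecidableEq V] [DecidableRel G.Adj]
    [G.LocallyFinite] (k : ℕ) (hk : 2 ≤ k) (F : Finset V) :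
    ∃ c : V → Fin k, ∀ v ∈ F,
      k * ((G.neighborFinset v).filter (fun u => c u = c v)).card ≤ G.degree v := by
  classical
  have hk0 : 0 < k := by omega
  set W : Finset V := F ∪ F.biUnion (fun v => G.neighborFinset v) with hW
  have hNW : ∀ v ∈ F, G.neighborFinset v ⊆ W := fun v hv u hu =>
    Finset.mem_union_right _ (Finset.mem_biUnion.mpr ⟨v, hv, hu⟩)
  have hFW : F ⊆ W := Finset.subset_union_left
  set Φ : (V → Fin k) → ℕ := fun c =>
    ∑ w ∈ W, ((G.neighborFinset w ∩ W).filter (fun u => c u = c w)).card with hΦ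
  have hne : (Set.range Φ).Nonempty := ⟨Φ (fun _ => ⟨0, hk0⟩), ⟨_, rfl⟩⟩
  obtain ⟨c, hc⟩ := Nat.sInf_mem hne
  refine ⟨c, ?_⟩
  intro v hv
  by_contra hbad
  push_neg at hbad
  -- hbad : G.degree v < k * card ...
  set count : Fin k → ℕ := fun j => ((G.neighborFinset v).filter (fun u => c u = j)).card
    with hcount
  have hdeg : G.degree v = ∑ j : Fin k, count j := by
    rw [SimpleGraph.degree]
    exact Finset.card_eq_sum_card_fiberwise (fun x _ => Finset.mem_univ (c x))
  obtain ⟨j, -, hj⟩ := Finset.exists_min_image Finset.univ count ⟨c v, Finset.mem_univ _⟩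
  have hkj : k * count j ≤ G.degree v := by
    calc k * count j = ∑ _i : Fin k, count j := by
          simp [Finset.sum_const, mul_comm]
      _ ≤ ∑ i : Fin k, count i := Finset.sum_le_sum fun i _ => hj i (Finset.mem_univ i)
      _ = G.degree v := hdeg.symm
  have hjA : count j < count (c v) := by
    have : k * count j < k * count (c v) := lt_of_le_of_lt hkj hbad
    exact Nat.lt_of_mul_lt_mul_left this
  set c' : V → Fin k := Function.update c v j with hc'
  have hvW : v ∈ W := hFW hv
  have hNvW : G.neighborFinset v ∩ W = G.neighborFinset v :=
    Finset.inter_eq_left.mpr (hNW v hv)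
  have hvnotN : v ∉ G.neighborFinset v := by
    simp [SimpleGraph.mem_neighborFinset]
  have hne_v : ∀ u ∈ G.neighborFinset v, u ≠ v := by
    intro u hu
    rw [SimpleGraph.mem_neighborFinset] at hu
    exact hu.ne'
  have hsub : G.neighborFinset v ⊆ W.erase v := fun u hu =>
    Finset.mem_erase.mpr ⟨hne_v u hu, hNW v hv hu⟩
  set g : (V → Fin k) → V → ℕ := fun d w =>
    ((G.neighborFinset w ∩ W).filter (fun u => d u = d w)).card with hg
  -- terms at v
  have htermv : ∀ d : V → Fin k,
      ((G.neighborFinset v ∩ W).filter (fun u => d u = d v)).card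
        = ((G.neighborFinset v).filter (fun u => d u = d v)).card := by
    intro d; rw [hNvW]
  have htv' : g c' v = count j := by
    show ((G.neighborFinset v ∩ W).filter (fun u => c' u = c' v)).card = count j
    rw [htermv, hcount]
    congr 1
    apply Finset.filter_congr
    intro u hu
    simp [hc', Function.update_of_ne (hne_v u hu), Function.update_self]
  have htv : g c v = count (c v) := by
    show ((G.neighborFinset v ∩ W).filter (fun u => c u = c v)).card = count (c v)
    rw [htermv]
  -- base values
  set base : V → ℕ := fun w =>
    (((G.neighborFinset w ∩ W).erase v).filter (fun u => c u = c w)).card with hbase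
  have hsplit : ∀ w ∈ G.neighborFinset v,
      g c' w = base w + (if j = c w then 1 else 0)
      ∧ g c w = base w + (if c v = c w then 1 else 0) := by
    intro w hw
    show ((G.neighborFinset w ∩ W).filter (fun u => c' u = c' w)).card
          = base w + (if j = c w then 1 else 0)
      ∧ ((G.neighborFinset w ∩ W).filter (fun u => c u = c w)).card
          = base w + (if c v = c w then 1 else 0)
    have hwv : w ≠ v := hne_v w hw
    have hvNw : v ∈ G.neighborFinset w ∩ W := by
      rw [Finset.mem_inter, SimpleGraph.mem_neighborFinset]
      rw [SimpleGraph.mem_neighborFinset] at hw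
      exact ⟨hw.symm, hvW⟩
    constructor
    · rw [card_filter_indicator _ _ v hvNw]
      have h1 : (((G.neighborFinset w ∩ W).erase v).filter (fun u => c' u = c' w)).card
          = base w := by
        congr 1
        apply Finset.filter_congr
        intro u hu
        have huv : u ≠ v := (Finset.mem_erase.mp hu).1
        simp [hc', Function.update_of_ne huv, Function.update_of_ne hwv]
      rw [h1]
      congr 1
      simp [hc', Function.update_self, Function.update_of_ne hwv]
    · rw [card_filter_indicator _ _ v hvNw]
  -- sums of indicators
  have hindic : ∀ x : Fin k,
      (∑ w ∈ G.neighborFinset v, if x = c w then 1 else 0) = count x := by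
    intro x
    show _ = ((G.neighborFinset v).filter (fun u => c u = x)).card
    rw [Finset.card_filter]
    apply Finset.sum_congr rfl
    intro w _
    simp [eq_comm]
  -- unchanged terms
  have hunch : ∀ w ∈ (W.erase v) \ G.neighborFinset v,
      g c' w = g c w := by
    intro w hw
    show ((G.neighborFinset w ∩ W).filter (fun u => c' u = c' w)).card
        = ((G.neighborFinset w ∩ W).filter (fun u => c u = c w)).card
    obtain ⟨hw1, hw2⟩ := Finset.mem_sdiff.mp hw
    have hwv : w ≠ v := (Finset.mem_erase.mp hw1).1
    congr 1
    apply Finset.filter_congr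
    intro u hu
    have huv : u ≠ v := by
      rintro rfl
      apply hw2
      rw [SimpleGraph.mem_neighborFinset]
      rw [Finset.mem_inter, SimpleGraph.mem_neighborFinset] at hu
      exact hu.1.symm
    simp [hc', Function.update_of_ne huv, Function.update_of_ne hwv]
  -- assemble
  have hsum : ∀ d : V → Fin k, Φ d = g d v + ∑ w ∈ W.erase v, g d w := by
    intro d
    rw [hΦ]
    exact (Finset.add_sum_erase W (g d) hvW).symm
  have hsplitsum : ∀ d : V → Fin k,
      ∑ w ∈ W.erase v, g d w
        = (∑ w ∈ (W.erase v) \ G.neighborFinset v, g d w)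
          + ∑ w ∈ G.neighborFinset v, g d w := by
    intro d
    exact (Finset.sum_sdiff hsub).symm
  have hΦc : Φ c = count (c v) + ((∑ w ∈ (W.erase v) \ G.neighborFinset v, g c w)
      + ((∑ w ∈ G.neighborFinset v, base w) + count (c v))) := by
    rw [hsum, hsplitsum, htv]
    congr 1
    congr 1
    rw [← hindic (c v), ← Finset.sum_add_distrib]
    apply Finset.sum_congr rfl
    intro w hw
    exact (hsplit w hw).2
  have hΦc' : Φ c' = count j + ((∑ w ∈ (W.erase v) \ G.neighborFinset v, g c w)
      + ((∑ w ∈ G.neighborFinset v, base w) + count j)) := by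
    rw [hsum, hsplitsum, htv']
    congr 1
    congr 1
    · exact Finset.sum_congr rfl hunch
    · rw [← hindic j, ← Finset.sum_add_distrib]
      apply Finset.sum_congr rfl
      intro w hw
      exact (hsplit w hw).1
  have hlt : Φ c' < Φ c := by rw [hΦc, hΦc']; omega
  have : Φ c ≤ Φ c' := hc ▸ Nat.sInf_le (Set.mem_range_self c')
  omega

theorem locally_finite_integrated_coloring
    (V : Type) (G : SimpleGraph V) [DecidableEq V] [DecidableRel G.Adj]
    [G.LocallyFinite]
    (k : ℕ) (hk : 2 ≤ k) :
    ∃ c : V → Fin k, ∀ v : V,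
      (((G.neighborFinset v).filter (fun u => c u = c v)).card : ℝ)
        ≤ (1 / k) * G.degree v := by
  classical
  have hk0 : 0 < k := by omega
  set S : V → Set (V → Fin k) := fun v =>
    {c | k * ((G.neighborFinset v).filter (fun u => c u = c v)).card ≤ G.degree v} with hS
  have hScl : ∀ v : V, IsClosed (S v) := by
    intro v
    set s : Finset V := insert v (G.neighborFinset v) with hs
    set ρ : (V → Fin k) → (↥s → Fin k) := fun c u => c u.1 with hρdef
    have hρ : Continuous ρ := continuous_pi fun u => continuous_apply u.1
    have key : S v = ρ ⁻¹' (ρ '' S v) := by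
      apply Set.Subset.antisymm (Set.subset_preimage_image _ _)
      rintro c ⟨c', hc', hcc⟩
      have hvs : v ∈ s := Finset.mem_insert_self _ _
      have heq : ((G.neighborFinset v).filter (fun u => c u = c v)).card
          = ((G.neighborFinset v).filter (fun u => c' u = c' v)).card := by
        congr 1
        apply Finset.filter_congr
        intro u hu
        have h1 : c' u = c u := congrFun hcc ⟨u, Finset.mem_insert_of_mem hu⟩
        have h2 : c' v = c v := congrFun hcc ⟨v, hvs⟩
        rw [h1, h2]
      simp only [hS, Set.mem_setOf_eq] at hc' ⊢
      rw [heq]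
      exact hc'
    rw [key]
    exact (isClosed_discrete _).preimage hρ
  set t : Finset V → Set (V → Fin k) := fun F => ⋂ v ∈ F, S v with ht
  have htcl : ∀ F, IsClosed (t F) := fun F =>
    isClosed_biInter fun v _ => hScl v
  have htne : ∀ F, (t F).Nonempty := by
    intro F
    obtain ⟨c, hc⟩ := exists_good_on V G k hk F
    exact ⟨c, Set.mem_iInter₂.mpr fun v hv => hc v hv⟩
  have htdir : Directed (· ⊇ ·) t := by
    intro F₁ F₂
    refine ⟨F₁ ∪ F₂, ?_, ?_⟩
    · exact Set.biInter_subset_biInter_left fun v hv => Finset.mem_union_left _ hv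
    · exact Set.biInter_subset_biInter_left fun v hv => Finset.mem_union_right _ hv
  have htcp : ∀ F, IsCompact (t F) := fun F => (htcl F).isCompact
  obtain ⟨c, hc⟩ := IsCompact.nonempty_iInter_of_directed_nonempty_isCompact_isClosed
    t htdir htne htcp htcl
  refine ⟨c, fun v => ?_⟩
  have hcv : c ∈ S v := by
    have h1 := Set.mem_iInter.mp hc {v}
    exact Set.mem_iInter₂.mp h1 v (Finset.mem_singleton_self v)
  simp only [hS, Set.mem_setOf_eq] at hcv
  rw [one_div, inv_mul_eq_div, le_div_iff₀ (by exact_mod_cast hk0 : (0:ℝ) < k)]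
  have h2 : (((G.neighborFinset v).filter (fun u => c u = c v)).card) * k ≤ G.degree v := by
    rw [mul_comm]; exact hcv
  exact_mod_cast h2
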